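/- Let b satisfy ⟨b(x)−b(y), x−y⟩ ≥ α|x−y|², let φ(x) = exp(μ√(1+|x|²)) with μ > 0, let L₀ > 0 and L(x,y) = L₀(1+|x|+|y|), and suppose the operator F satisfies F(x,[φ]) ≤ C(F)φ(x) for all x (e.g. F(x,[φ]) = tr(A(x)D²φ(x)) with bounded A, or the Lévy integral operator with measure ν satisfying the integrability condition). Define L_L[φ](x,y) = −F(x,[φ]) − F(y,[φ]) + ⟨b(x),Dφ(x)⟩ + ⟨b(y),Dφ(y)⟩ − L(x,y)(|Dφ(x)| + |Dφ(y)|). Then if α > 2L₀, there exists K = K(α, L₀, μ, C(F), |b(0)|) > 0 such that L_L[φ](x,y) ≥ φ(x) + φ(y) − 2K for all x, y ∈ ℝ^N. -/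

import Mathlib

section aux

lemma sfacts (r : ℝ) (hr : 0 ≤ r) :
    1 ≤ Real.sqrt (1 + r ^ 2) ∧ r ≤ Real.sqrt (1 + r ^ 2) ∧ Real.sqrt (1 + r ^ 2) ≤ 1 + r := by
  refine ⟨Real.le_sqrt_of_sq_le (by nlinarith), Real.le_sqrt_of_sq_le (by nlinarith), ?_⟩
  have h : Real.sqrt (1 + r ^ 2) ≤ Real.sqrt ((1 + r) ^ 2) := Real.sqrt_le_sqrt (by nlinarith)
  rwa [Real.sqrt_sq (by linarith)] at h

lemma rsq_div (r : ℝ) (hr : 0 ≤ r) :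
    r - 1 ≤ r ^ 2 / Real.sqrt (1 + r ^ 2) := by
  obtain ⟨h1, h2, h3⟩ := sfacts r hr
  have hs : 0 < Real.sqrt (1 + r ^ 2) := by linarith
  rw [le_div_iff₀ hs]
  rcases le_total r 1 with h | h
  · nlinarith
  · nlinarith

lemma pmono (μ : ℝ) (hμ : 0 ≤ μ) {r₁ r₂ : ℝ} (h1 : 0 ≤ r₁) (h12 : r₁ ≤ r₂) :
    μ * Real.exp (μ * Real.sqrt (1 + r₁ ^ 2)) * r₁ / Real.sqrt (1 + r₁ ^ 2) ≤
      μ * Real.exp (μ * Real.sqrt (1 + r₂ ^ 2)) * r₂ / Real.sqrt (1 + r₂ ^ 2) := by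
  obtain ⟨ha1, ha2, ha3⟩ := sfacts r₁ h1
  obtain ⟨hb1, hb2, hb3⟩ := sfacts r₂ (h1.trans h12)
  have hs1 : 0 < Real.sqrt (1 + r₁ ^ 2) := by linarith
  have hs2 : 0 < Real.sqrt (1 + r₂ ^ 2) := by linarith
  have hsq1 : Real.sqrt (1 + r₁ ^ 2) ^ 2 = 1 + r₁ ^ 2 := Real.sq_sqrt (by positivity)
  have hsq2 : Real.sqrt (1 + r₂ ^ 2) ^ 2 = 1 + r₂ ^ 2 := Real.sq_sqrt (by positivity)
  have hE : Real.exp (μ * Real.sqrt (1 + r₁ ^ 2)) ≤ Real.exp (μ * Real.sqrt (1 + r₂ ^ 2)) := by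
    apply Real.exp_le_exp.2
    apply mul_le_mul_of_nonneg_left _ hμ
    apply Real.sqrt_le_sqrt; nlinarith
  have hdiv : r₁ / Real.sqrt (1 + r₁ ^ 2) ≤ r₂ / Real.sqrt (1 + r₂ ^ 2) := by
    rw [div_le_div_iff₀ hs1 hs2]
    have hkey : (r₁ * Real.sqrt (1 + r₂ ^ 2)) ^ 2 ≤ (r₂ * Real.sqrt (1 + r₁ ^ 2)) ^ 2 := by
      rw [mul_pow, mul_pow, hsq1, hsq2]; nlinarith
    have ha : r₁ * Real.sqrt (1 + r₂ ^ 2) = Real.sqrt ((r₁ * Real.sqrt (1 + r₂ ^ 2)) ^ 2) :=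
      (Real.sqrt_sq (mul_nonneg h1 hs2.le)).symm
    have hbb : r₂ * Real.sqrt (1 + r₁ ^ 2) = Real.sqrt ((r₂ * Real.sqrt (1 + r₁ ^ 2)) ^ 2) :=
      (Real.sqrt_sq (mul_nonneg (h1.trans h12) hs1.le)).symm
    rw [ha, hbb]
    exact Real.sqrt_le_sqrt hkey
  calc μ * Real.exp (μ * Real.sqrt (1 + r₁ ^ 2)) * r₁ / Real.sqrt (1 + r₁ ^ 2)
      = (μ * Real.exp (μ * Real.sqrt (1 + r₁ ^ 2))) * (r₁ / Real.sqrt (1 + r₁ ^ 2)) := by ring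
    _ ≤ (μ * Real.exp (μ * Real.sqrt (1 + r₂ ^ 2))) * (r₂ / Real.sqrt (1 + r₂ ^ 2)) :=
        mul_le_mul (mul_le_mul_of_nonneg_left hE hμ) hdiv (by positivity) (by positivity)
    _ = μ * Real.exp (μ * Real.sqrt (1 + r₂ ^ 2)) * r₂ / Real.sqrt (1 + r₂ ^ 2) := by ring

lemma core (μ β' D : ℝ) (hμ : 0 < μ) (hβ : 0 < β') (hD : 0 < D) (r : ℝ) (hr : 0 ≤ r) :
    -(D * Real.exp (μ * (1 + D / β'))) ≤ Real.exp (μ * Real.sqrt (1 + r ^ 2)) * (β' * r - D) := by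
  obtain ⟨h1, h2, h3⟩ := sfacts r hr
  have hEpos : 0 < Real.exp (μ * Real.sqrt (1 + r ^ 2)) := Real.exp_pos _
  rcases le_or_gt D (β' * r) with h | h
  · have h0 : 0 ≤ Real.exp (μ * Real.sqrt (1 + r ^ 2)) * (β' * r - D) :=
      mul_nonneg hEpos.le (by linarith)
    nlinarith [Real.exp_pos (μ * (1 + D / β'))]
  · have hrR : r ≤ D / β' := by rw [le_div_iff₀ hβ]; nlinarith
    have hE : Real.exp (μ * Real.sqrt (1 + r ^ 2)) ≤ Real.exp (μ * (1 + D / β')) := by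
      apply Real.exp_le_exp.2
      apply mul_le_mul_of_nonneg_left _ hμ.le
      linarith
    nlinarith [mul_nonneg (mul_nonneg hEpos.le hβ.le) hr]

variable {E : Type*} [NormedAddCommGroup E] [InnerProductSpace ℝ E] [CompleteSpace E]

lemma grad_phi (μ : ℝ) (x : E) :
    HasGradientAt (fun z : E => Real.exp (μ * Real.sqrt (1 + ‖z‖ ^ 2)))
      ((μ * Real.exp (μ * Real.sqrt (1 + ‖x‖ ^ 2)) / Real.sqrt (1 + ‖x‖ ^ 2)) • x) x := by
  set u : ℝ := 1 + ‖x‖ ^ 2 with hu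
  have hupos : 0 < u := by positivity
  set s : ℝ := Real.sqrt u with hs
  have hspos : 0 < s := Real.sqrt_pos.mpr hupos
  have h1 : HasFDerivAt (fun z : E => ‖z‖ ^ 2) (2 • (innerSL ℝ x)) x := by
    simpa using (hasFDerivAt_id x).norm_sq
  have h2 : HasFDerivAt (fun z : E => 1 + ‖z‖ ^ 2) (2 • (innerSL ℝ x)) x :=
    h1.const_add 1
  have h3 : HasDerivAt Real.sqrt (1 / (2 * s)) u := Real.hasDerivAt_sqrt hupos.ne'
  have h4 : HasDerivAt (fun t : ℝ => Real.exp (μ * t)) (Real.exp (μ * s) * μ) s := by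
    simpa using ((hasDerivAt_id s).const_mul μ).exp
  have h5 : HasDerivAt (fun t : ℝ => Real.exp (μ * Real.sqrt t))
      (Real.exp (μ * s) * μ * (1 / (2 * s))) u := h4.comp u h3
  have h6 : HasFDerivAt (fun z : E => Real.exp (μ * Real.sqrt (1 + ‖z‖ ^ 2)))
      ((Real.exp (μ * s) * μ * (1 / (2 * s))) • (2 • (innerSL ℝ x))) x :=
    by have := h5.comp_hasFDerivAt x h2; exact this
  rw [hasGradientAt_iff_hasFDerivAt]
  refine h6.congr_fderiv ?_
  ext v
  simp [real_inner_smul_left, InnerProductSpace.toDual_apply_apply]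
  field_simp

end aux

set_option maxHeartbeats 1600000 in
theorem supersolution_property_growth_function {N : ℕ} (μ α L₀ CF : ℝ)
    (hμ : 0 < μ) (hα : 0 < α) (hL₀ : 0 < L₀) (hCF : 0 ≤ CF)
    (hαL : α > 2 * L₀)
    (b : EuclideanSpace ℝ (Fin N) → EuclideanSpace ℝ (Fin N))
    (hb : ∀ x y : EuclideanSpace ℝ (Fin N),
      α * ‖x - y‖ ^ 2 ≤ (inner ℝ (b x - b y) (x - y) : ℝ))
    (φ : EuclideanSpace ℝ (Fin N) → ℝ)
    (hφ : ∀ x, φ x = Real.exp (μ * Real.sqrt (1 + ‖x‖ ^ 2)))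
    (F : EuclideanSpace ℝ (Fin N) → ℝ)
    (hF : ∀ x, F x ≤ CF * φ x) :
    ∃ K : ℝ, 0 < K ∧ ∀ x y : EuclideanSpace ℝ (Fin N),
      φ x + φ y - 2 * K ≤
        -F x - F y + (inner ℝ (b x) (gradient φ x) : ℝ) +
          (inner ℝ (b y) (gradient φ y) : ℝ) -
          L₀ * (1 + ‖x‖ + ‖y‖) * (‖gradient φ x‖ + ‖gradient φ y‖) := by
  have hφ' : φ = fun z => Real.exp (μ * Real.sqrt (1 + ‖z‖ ^ 2)) := funext hφ
  subst hφ'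
  set B : ℝ := ‖b 0‖ with hB
  have hBnn : 0 ≤ B := norm_nonneg _
  set β' : ℝ := μ * (α - 2 * L₀) with hβ'
  have hβpos : 0 < β' := by apply mul_pos hμ; linarith
  set D : ℝ := μ * α + μ * B + CF + μ * L₀ + 1 with hD
  have hDpos : 0 < D := by positivity
  refine ⟨D * Real.exp (μ * (1 + D / β')), by positivity, fun x y => ?_⟩
  set K : ℝ := D * Real.exp (μ * (1 + D / β')) with hK
  -- notation
  obtain ⟨hx1, hx2, hx3⟩ := sfacts ‖x‖ (norm_nonneg x)
  obtain ⟨hy1, hy2, hy3⟩ := sfacts ‖y‖ (norm_nonneg y)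
  set sx : ℝ := Real.sqrt (1 + ‖x‖ ^ 2) with hsx
  set sy : ℝ := Real.sqrt (1 + ‖y‖ ^ 2) with hsy
  set Ex : ℝ := Real.exp (μ * sx) with hEx
  set Ey : ℝ := Real.exp (μ * sy) with hEy
  have hsxpos : 0 < sx := by linarith
  have hsypos : 0 < sy := by linarith
  have hExpos : 0 < Ex := Real.exp_pos _
  have hEypos : 0 < Ey := Real.exp_pos _
  -- gradient formulas
  have hGx : gradient (fun z : EuclideanSpace ℝ (Fin N) =>
      Real.exp (μ * Real.sqrt (1 + ‖z‖ ^ 2))) x = (μ * Ex / sx) • x :=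
    (grad_phi μ x).gradient
  have hGy : gradient (fun z : EuclideanSpace ℝ (Fin N) =>
      Real.exp (μ * Real.sqrt (1 + ‖z‖ ^ 2))) y = (μ * Ey / sy) • y :=
    (grad_phi μ y).gradient
  rw [hGx, hGy]
  -- norms of gradients
  have hPx : ‖(μ * Ex / sx) • x‖ = μ * Ex * ‖x‖ / sx := by
    rw [norm_smul, Real.norm_eq_abs, abs_of_nonneg (by positivity)]; ring
  have hPy : ‖(μ * Ey / sy) • y‖ = μ * Ey * ‖y‖ / sy := by
    rw [norm_smul, Real.norm_eq_abs, abs_of_nonneg (by positivity)]; ring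
  -- inner product lower bounds
  have hbx : ∀ z : EuclideanSpace ℝ (Fin N),
      α * ‖z‖ ^ 2 - B * ‖z‖ ≤ (inner ℝ (b z) z : ℝ) := by
    intro z
    have h := hb z 0
    simp only [sub_zero] at h
    rw [inner_sub_left] at h
    have h2 : |(inner ℝ (b 0) z : ℝ)| ≤ B * ‖z‖ := by
      simpa [hB] using abs_real_inner_le_norm (b 0) z
    have h3 : -(B * ‖z‖) ≤ (inner ℝ (b 0) z : ℝ) := neg_le_of_abs_le h2
    linarith
  have hIx : μ * Ex * (α * (‖x‖ - 1) - B) ≤ (inner ℝ (b x) ((μ * Ex / sx) • x) : ℝ) := by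
    rw [real_inner_smul_right]
    have hc : (0:ℝ) ≤ μ * Ex / sx := by positivity
    have h1 : (μ * Ex / sx) * (α * ‖x‖ ^ 2 - B * ‖x‖) ≤ (μ * Ex / sx) * (inner ℝ (b x) x : ℝ) :=
      mul_le_mul_of_nonneg_left (hbx x) hc
    have heq : (μ * Ex / sx) * (α * ‖x‖ ^ 2 - B * ‖x‖)
        = α * (μ * Ex * (‖x‖ ^ 2 / sx)) - B * (μ * Ex * (‖x‖ / sx)) := by
      field_simp
    have e1 : μ * Ex * (‖x‖ - 1) ≤ μ * Ex * (‖x‖ ^ 2 / sx) :=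
      mul_le_mul_of_nonneg_left (by rw [hsx]; exact rsq_div ‖x‖ (norm_nonneg x)) (by positivity)
    have e2 : μ * Ex * (‖x‖ / sx) ≤ μ * Ex := by
      have h' : ‖x‖ / sx ≤ 1 := (div_le_one hsxpos).2 hx2
      have := mul_le_mul_of_nonneg_left h' (by positivity : (0:ℝ) ≤ μ * Ex)
      linarith
    have e1' : α * (μ * Ex * (‖x‖ - 1)) ≤ α * (μ * Ex * (‖x‖ ^ 2 / sx)) :=
      mul_le_mul_of_nonneg_left e1 hα.le
    have e2' : B * (μ * Ex * (‖x‖ / sx)) ≤ B * (μ * Ex) :=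
      mul_le_mul_of_nonneg_left e2 hBnn
    have goal_eq : μ * Ex * (α * (‖x‖ - 1) - B) = α * (μ * Ex * (‖x‖ - 1)) - B * (μ * Ex) := by
      ring
    linarith [h1, heq, e1', e2', goal_eq]
  have hIy : μ * Ey * (α * (‖y‖ - 1) - B) ≤ (inner ℝ (b y) ((μ * Ey / sy) • y) : ℝ) := by
    rw [real_inner_smul_right]
    have hc : (0:ℝ) ≤ μ * Ey / sy := by positivity
    have h1 : (μ * Ey / sy) * (α * ‖y‖ ^ 2 - B * ‖y‖) ≤ (μ * Ey / sy) * (inner ℝ (b y) y : ℝ) :=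
      mul_le_mul_of_nonneg_left (hbx y) hc
    have heq : (μ * Ey / sy) * (α * ‖y‖ ^ 2 - B * ‖y‖)
        = α * (μ * Ey * (‖y‖ ^ 2 / sy)) - B * (μ * Ey * (‖y‖ / sy)) := by
      field_simp
    have e1 : μ * Ey * (‖y‖ - 1) ≤ μ * Ey * (‖y‖ ^ 2 / sy) :=
      mul_le_mul_of_nonneg_left (by rw [hsy]; exact rsq_div ‖y‖ (norm_nonneg y)) (by positivity)
    have e2 : μ * Ey * (‖y‖ / sy) ≤ μ * Ey := by
      have h' : ‖y‖ / sy ≤ 1 := (div_le_one hsypos).2 hy2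
      have := mul_le_mul_of_nonneg_left h' (by positivity : (0:ℝ) ≤ μ * Ey)
      linarith
    have e1' : α * (μ * Ey * (‖y‖ - 1)) ≤ α * (μ * Ey * (‖y‖ ^ 2 / sy)) :=
      mul_le_mul_of_nonneg_left e1 hα.le
    have e2' : B * (μ * Ey * (‖y‖ / sy)) ≤ B * (μ * Ey) :=
      mul_le_mul_of_nonneg_left e2 hBnn
    have goal_eq : μ * Ey * (α * (‖y‖ - 1) - B) = α * (μ * Ey * (‖y‖ - 1)) - B * (μ * Ey) := by
      ring
    linarith [h1, heq, e1', e2', goal_eq]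
  -- L-term upper bound
  set Px : ℝ := μ * Ex * ‖x‖ / sx with hPx'
  set Py : ℝ := μ * Ey * ‖y‖ / sy with hPy'
  have hPxnn : 0 ≤ Px := by positivity
  have hPynn : 0 ≤ Py := by positivity
  have hPxle : Px ≤ μ * Ex := by
    rw [hPx', div_le_iff₀ hsxpos]
    have := mul_le_mul_of_nonneg_left hx2 (by positivity : (0:ℝ) ≤ μ * Ex)
    linarith
  have hPyle : Py ≤ μ * Ey := by
    rw [hPy', div_le_iff₀ hsypos]
    have := mul_le_mul_of_nonneg_left hy2 (by positivity : (0:ℝ) ≤ μ * Ey)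
    linarith
  have hre : ‖y‖ * Px + ‖x‖ * Py ≤ ‖x‖ * Px + ‖y‖ * Py := by
    rcases le_total ‖x‖ ‖y‖ with h | h
    · have hp := pmono μ hμ.le (norm_nonneg x) h
      rw [← hsx, ← hsy, ← hEx, ← hEy, ← hPx', ← hPy'] at hp
      nlinarith [mul_nonneg (sub_nonneg.2 h) (sub_nonneg.2 hp)]
    · have hp := pmono μ hμ.le (norm_nonneg y) h
      rw [← hsx, ← hsy, ← hEx, ← hEy, ← hPx', ← hPy'] at hp
      nlinarith [mul_nonneg (sub_nonneg.2 h) (sub_nonneg.2 hp)]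
  have hL : L₀ * (1 + ‖x‖ + ‖y‖) * (Px + Py)
      ≤ L₀ * ((1 + 2 * ‖x‖) * (μ * Ex) + (1 + 2 * ‖y‖) * (μ * Ey)) := by
    have step1 : (1 + ‖x‖ + ‖y‖) * (Px + Py) ≤ (1 + 2 * ‖x‖) * Px + (1 + 2 * ‖y‖) * Py := by
      nlinarith [hre]
    have step2 : (1 + 2 * ‖x‖) * Px ≤ (1 + 2 * ‖x‖) * (μ * Ex) :=
      mul_le_mul_of_nonneg_left hPxle (by positivity)
    have step3 : (1 + 2 * ‖y‖) * Py ≤ (1 + 2 * ‖y‖) * (μ * Ey) :=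
      mul_le_mul_of_nonneg_left hPyle (by positivity)
    have step4 : (1 + ‖x‖ + ‖y‖) * (Px + Py)
        ≤ (1 + 2 * ‖x‖) * (μ * Ex) + (1 + 2 * ‖y‖) * (μ * Ey) := by linarith
    rw [mul_assoc]
    exact mul_le_mul_of_nonneg_left step4 hL₀.le
  -- per-point endgame via core
  have hcx := core μ β' D hμ hβpos hDpos ‖x‖ (norm_nonneg x)
  have hcy := core μ β' D hμ hβpos hDpos ‖y‖ (norm_nonneg y)
  rw [← hsx, ← hEx] at hcx
  rw [← hsy, ← hEy] at hcy
  have hptx : Ex - K ≤ -(CF * Ex) + μ * Ex * (α * (‖x‖ - 1) - B) - L₀ * ((1 + 2 * ‖x‖) * (μ * Ex)) := by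
    have : -(CF * Ex) + μ * Ex * (α * (‖x‖ - 1) - B) - L₀ * ((1 + 2 * ‖x‖) * (μ * Ex))
        = Ex * (β' * ‖x‖ - D) + Ex := by rw [hβ', hD]; ring
    rw [this, hK]; linarith
  have hpty : Ey - K ≤ -(CF * Ey) + μ * Ey * (α * (‖y‖ - 1) - B) - L₀ * ((1 + 2 * ‖y‖) * (μ * Ey)) := by
    have : -(CF * Ey) + μ * Ey * (α * (‖y‖ - 1) - B) - L₀ * ((1 + 2 * ‖y‖) * (μ * Ey))
        = Ey * (β' * ‖y‖ - D) + Ey := by rw [hβ', hD]; ring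
    rw [this, hK]; linarith
  -- assemble
  have hFx : F x ≤ CF * Ex := by rw [hEx, hsx]; exact hF x
  have hFy : F y ≤ CF * Ey := by rw [hEy, hsy]; exact hF y
  have hgoal : (fun z : EuclideanSpace ℝ (Fin N) => Real.exp (μ * Real.sqrt (1 + ‖z‖ ^ 2))) x
      = Ex := by rw [hEx, hsx]
  have hgoal' : (fun z : EuclideanSpace ℝ (Fin N) => Real.exp (μ * Real.sqrt (1 + ‖z‖ ^ 2))) y
      = Ey := by rw [hEy, hsy]
  rw [hgoal, hgoal', hPx, hPy]
  linarith [hIx, hIy, hL, hptx, hpty, hFx, hFy]
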